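/- Suppose R satisfies the curvature-type symmetries and the q-invariance R(qx,qy,qz,qu) = R(x,y,z,u). Let x ∈ ℝ³ be such that {x, qx, q²x} is an orthonormal basis with respect to g, and let u ∈ ℝ³ induce a q-basis with g(u,u) = 1. Set c = g(u, qu) (the cosine of the angle φ = ∠(u,qu)). Then μ(u, qu) − μ(x, qx) = (2c/(1−c))·R(x, qx, x, q²x). -/

import Mathlib

/-- The metric `g` determined by the circulant matrix with rows `(A,B,B),(B,A,B),(B,B,A)`. -/
def g (A B : ℝ) (x y : Fin 3 → ℝ) : ℝ :=
  A * (x 0 * y 0 + x 1 * y 1 + x 2 * y 2) +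
    B * (x 0 * y 1 + x 0 * y 2 + x 1 * y 0 + x 1 * y 2 + x 2 * y 0 + x 2 * y 1)

/-- The structure `q`, given by `q(x¹,x²,x³) = (-x²,-x³,-x¹)`, with `q³ = -id`. -/
def q (x : Fin 3 → ℝ) : Fin 3 → ℝ := ![-(x 1), -(x 2), -(x 0)]

/-- The sectional curvature of the 2-plane spanned by `x, y`. -/
noncomputable def sec (A B : ℝ) (R : MultilinearMap ℝ (fun _ : Fin 4 => Fin 3 → ℝ) ℝ)
    (x y : Fin 3 → ℝ) : ℝ :=
  R ![x, y, x, y] / (g A B x x * g A B y y - (g A B x y) ^ 2)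

section Aux

lemma gsymm (A B : ℝ) (y z : Fin 3 → ℝ) : g A B y z = g A B z y := by
  simp only [g]; ring

lemma gq' (A B : ℝ) (y z : Fin 3 → ℝ) : g A B (q y) (q z) = g A B y z := by
  simp only [g, q]
  simp [Matrix.cons_val_zero, Matrix.cons_val_one]
  ring

lemma gzeroL (A B : ℝ) (w : Fin 3 → ℝ) : g A B 0 w = 0 := by
  simp [g]

lemma gcombL (A B a b d : ℝ) (x y z w : Fin 3 → ℝ) :
    g A B (a • x + b • y + d • z) w =
      a * g A B x w + b * g A B y w + d * g A B z w := by
  simp only [g, Pi.add_apply, Pi.smul_apply, smul_eq_mul]; ring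

lemma gcomb3 (A B a b d a' b' d' : ℝ) (x y z : Fin 3 → ℝ) :
    g A B (a • x + b • y + d • z) (a' • x + b' • y + d' • z) =
      a * a' * g A B x x + a * b' * g A B x y + a * d' * g A B x z +
      b * a' * g A B y x + b * b' * g A B y y + b * d' * g A B y z +
      d * a' * g A B z x + d * b' * g A B z y + d * d' * g A B z z := by
  simp only [g, Pi.add_apply, Pi.smul_apply, smul_eq_mul]; ring

lemma gsub (A B c : ℝ) (y z : Fin 3 → ℝ) :
    g A B (y - c • z) (y - c • z) =
      g A B y y - 2 * c * g A B y z + c ^ 2 * g A B z z := by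
  simp only [g, Pi.sub_apply, Pi.smul_apply, smul_eq_mul]; ring

lemma gpos (A B : ℝ) (hAB : A > B) (hB : B > 0) (y : Fin 3 → ℝ) (hy : y ≠ 0) :
    0 < g A B y y := by
  have h : y 0 ≠ 0 ∨ y 1 ≠ 0 ∨ y 2 ≠ 0 := by
    by_contra h
    push_neg at h
    exact hy (by funext i; fin_cases i <;> simp [h.1, h.2.1, h.2.2])
  have hsq : 0 < y 0 ^ 2 + y 1 ^ 2 + y 2 ^ 2 := by
    rcases h with h | h | h <;> positivity
  have key : g A B y y
      = (A - B) * (y 0 ^ 2 + y 1 ^ 2 + y 2 ^ 2) + B * (y 0 + y 1 + y 2) ^ 2 := by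
    simp only [g]; ring
  rw [key]
  nlinarith [sq_nonneg (y 0 + y 1 + y 2)]

lemma qlin (p r s : ℝ) (y z w : Fin 3 → ℝ) :
    q (p • y + r • z + s • w) = p • q y + r • q z + s • q w := by
  funext i; fin_cases i <;> simp [q] <;> ring

lemma qqq (y : Fin 3 → ℝ) : q (q (q y)) = -y := by
  funext i; fin_cases i <;> simp [q]

lemma upd0 (a b c d z : Fin 3 → ℝ) : Function.update ![a,b,c,d] 0 z = ![z,b,c,d] := by
  funext i; fin_cases i <;> simp
lemma upd1 (a b c d z : Fin 3 → ℝ) : Function.update ![a,b,c,d] 1 z = ![a,z,c,d] := by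
  funext i; fin_cases i <;> simp [Function.update]
lemma upd2 (a b c d z : Fin 3 → ℝ) : Function.update ![a,b,c,d] 2 z = ![a,b,z,d] := by
  funext i; fin_cases i <;> simp [Function.update]
lemma upd3 (a b c d z : Fin 3 → ℝ) : Function.update ![a,b,c,d] 3 z = ![a,b,c,z] := by
  funext i; fin_cases i <;> simp [Function.update]

variable (R : MultilinearMap ℝ (fun _ : Fin 4 => Fin 3 → ℝ) ℝ)

lemma Radd0 (a a' b c d : Fin 3 → ℝ) :
    R ![a + a', b, c, d] = R ![a, b, c, d] + R ![a', b, c, d] := by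
  have := R.map_update_add ![a, b, c, d] 0 a a'
  simpa [upd0] using this
lemma Radd1 (a b b' c d : Fin 3 → ℝ) :
    R ![a, b + b', c, d] = R ![a, b, c, d] + R ![a, b', c, d] := by
  have := R.map_update_add ![a, b, c, d] 1 b b'
  simpa [upd1] using this
lemma Radd2 (a b c c' d : Fin 3 → ℝ) :
    R ![a, b, c + c', d] = R ![a, b, c, d] + R ![a, b, c', d] := by
  have := R.map_update_add ![a, b, c, d] 2 c c'
  simpa [upd2] using this
lemma Radd3 (a b c d d' : Fin 3 → ℝ) :
    R ![a, b, c, d + d'] = R ![a, b, c, d] + R ![a, b, c, d'] := by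
  have := R.map_update_add ![a, b, c, d] 3 d d'
  simpa [upd3] using this

lemma Rsmul0 (t : ℝ) (a b c d : Fin 3 → ℝ) :
    R ![t • a, b, c, d] = t * R ![a, b, c, d] := by
  have := R.map_update_smul ![a, b, c, d] 0 t a
  simpa [upd0] using this
lemma Rsmul1 (t : ℝ) (a b c d : Fin 3 → ℝ) :
    R ![a, t • b, c, d] = t * R ![a, b, c, d] := by
  have := R.map_update_smul ![a, b, c, d] 1 t b
  simpa [upd1] using this
lemma Rsmul2 (t : ℝ) (a b c d : Fin 3 → ℝ) :
    R ![a, b, t • c, d] = t * R ![a, b, c, d] := by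
  have := R.map_update_smul ![a, b, c, d] 2 t c
  simpa [upd2] using this
lemma Rsmul3 (t : ℝ) (a b c d : Fin 3 → ℝ) :
    R ![a, b, c, t • d] = t * R ![a, b, c, d] := by
  have := R.map_update_smul ![a, b, c, d] 3 t d
  simpa [upd3] using this

lemma Rneg1 (a b c d : Fin 3 → ℝ) : R ![a, -b, c, d] = -R ![a, b, c, d] := by
  have := Rsmul1 R (-1) a b c d
  simpa using this
lemma Rneg3 (a b c d : Fin 3 → ℝ) : R ![a, b, c, -d] = -R ![a, b, c, d] := by
  have := Rsmul3 R (-1) a b c d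
  simpa using this

end Aux

set_option maxHeartbeats 2000000 in
/-- if `{x,qx,q²x}` is `g`-orthonormal and `u` induces a `q`-basis with
`g(u,u) = 1`, then with `c = g(u,qu) = cos ∠(u,qu)`,
`μ(u,qu) - μ(x,qx) = (2c/(1-c))·R(x,qx,x,q²x)`. -/
theorem sectional_curvature_difference (A B : ℝ) (hAB : A > B) (hB : B > 0)
    (R : MultilinearMap ℝ (fun _ : Fin 4 => Fin 3 → ℝ) ℝ)
    (hsym1 : ∀ x y z u : Fin 3 → ℝ, R ![x, y, z, u] = -R ![y, x, z, u])
    (hsym2 : ∀ x y z u : Fin 3 → ℝ, R ![x, y, z, u] = -R ![x, y, u, z])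
    (hsym3 : ∀ x y z u : Fin 3 → ℝ, R ![x, y, z, u] = R ![z, u, x, y])
    (hq : ∀ x y z u : Fin 3 → ℝ, R ![q x, q y, q z, q u] = R ![x, y, z, u])
    (x u : Fin 3 → ℝ)
    (hx1 : g A B x x = 1) (hx2 : g A B (q x) (q x) = 1)
    (hx3 : g A B (q (q x)) (q (q x)) = 1)
    (hx4 : g A B x (q x) = 0) (hx5 : g A B x (q (q x)) = 0)
    (hx6 : g A B (q x) (q (q x)) = 0)
    (hu : LinearIndependent ℝ ![u, q u, q (q u)]) (huu : g A B u u = 1) :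
    sec A B R u (q u) - sec A B R x (q x) =
      (2 * g A B u (q u) / (1 - g A B u (q u))) * R ![x, q x, x, q (q x)] := by
  -- zero lemmas
  have Rzero1 : ∀ a c d : Fin 3 → ℝ, R ![a, a, c, d] = 0 := by
    intro a c d; have := hsym1 a a c d; linarith
  have Rzero2 : ∀ a b c : Fin 3 → ℝ, R ![a, b, c, c] = 0 := by
    intro a b c; have := hsym2 a b c c; linarith
  -- base curvature components
  have hK23 : R ![q x, q (q x), q x, q (q x)] = R ![x, q x, x, q x] := hq x (q x) x (q x)
  have hK13 : R ![x, q (q x), x, q (q x)] = R ![x, q x, x, q x] := by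
    have h1 := hq (q x) (q (q x)) (q x) (q (q x))
    rw [qqq, Rneg1, Rneg3, neg_neg, hK23] at h1
    rw [hsym1 x (q (q x)) x (q (q x)), hsym2 (q (q x)) x x (q (q x)), neg_neg, h1]
  have hL1223 : R ![x, q x, q x, q (q x)] = R ![x, q x, x, q (q x)] := by
    have h1 := hq x (q x) x (q (q x))
    rw [qqq, Rneg3] at h1
    rw [hsym3 x (q x) (q x) (q (q x)), hsym2 (q x) (q (q x)) x (q x)]
    linarith
  have hL1323 : R ![x, q (q x), q x, q (q x)] = R ![x, q x, x, q (q x)] := by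
    have h2 := hq x (q x) (q x) (q (q x))
    rw [qqq, Rneg3, hL1223] at h2
    rw [hsym1 x (q (q x)) (q x) (q (q x)), hsym3 (q (q x)) x (q x) (q (q x))]
    linarith
  have hL1312 : R ![x, q (q x), x, q x] = R ![x, q x, x, q (q x)] := by
    rw [hsym3 x (q (q x)) x (q x)]
  have hL2312 : R ![q x, q (q x), x, q x] = R ![x, q x, x, q (q x)] := by
    rw [hsym3 (q x) (q (q x)) x (q x)]; exact hL1223
  have hL2313 : R ![q x, q (q x), x, q (q x)] = R ![x, q x, x, q (q x)] := by
    rw [hsym3 (q x) (q (q x)) x (q (q x))]; exact hL1323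
  have hc1221 : R ![x, q x, q x, x] = -R ![x, q x, x, q x] := by
    rw [hsym2 (x) (q x) (q x) (x)]; try ring
  have hc1223 : R ![x, q x, q x, q (q x)] = R ![x, q x, x, q (q x)] := by
    rw [hL1223]; try ring
  have hc1231 : R ![x, q x, q (q x), x] = -R ![x, q x, x, q (q x)] := by
    rw [hsym2 (x) (q x) (q (q x)) (x)]; try ring
  have hc1232 : R ![x, q x, q (q x), q x] = -R ![x, q x, x, q (q x)] := by
    rw [hsym2 (x) (q x) (q (q x)) (q x)]; rw [hL1223]; try ring
  have hc1312 : R ![x, q (q x), x, q x] = R ![x, q x, x, q (q x)] := by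
    rw [hL1312]; try ring
  have hc1313 : R ![x, q (q x), x, q (q x)] = R ![x, q x, x, q x] := by
    rw [hK13]; try ring
  have hc1321 : R ![x, q (q x), q x, x] = -R ![x, q x, x, q (q x)] := by
    rw [hsym2 (x) (q (q x)) (q x) (x)]; rw [hL1312]; try ring
  have hc1323 : R ![x, q (q x), q x, q (q x)] = R ![x, q x, x, q (q x)] := by
    rw [hL1323]; try ring
  have hc1331 : R ![x, q (q x), q (q x), x] = -R ![x, q x, x, q x] := by
    rw [hsym2 (x) (q (q x)) (q (q x)) (x)]; rw [hK13]; try ring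
  have hc1332 : R ![x, q (q x), q (q x), q x] = -R ![x, q x, x, q (q x)] := by
    rw [hsym2 (x) (q (q x)) (q (q x)) (q x)]; rw [hL1323]; try ring
  have hc2112 : R ![q x, x, x, q x] = -R ![x, q x, x, q x] := by
    rw [hsym1 (q x) (x) (x) (q x)]; try ring
  have hc2113 : R ![q x, x, x, q (q x)] = -R ![x, q x, x, q (q x)] := by
    rw [hsym1 (q x) (x) (x) (q (q x))]; try ring
  have hc2121 : R ![q x, x, q x, x] = R ![x, q x, x, q x] := by
    rw [hsym1 (q x) (x) (q x) (x)]; rw [hsym2 (x) (q x) (q x) (x)]; try ring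
  have hc2123 : R ![q x, x, q x, q (q x)] = -R ![x, q x, x, q (q x)] := by
    rw [hsym1 (q x) (x) (q x) (q (q x))]; rw [hL1223]; try ring
  have hc2131 : R ![q x, x, q (q x), x] = R ![x, q x, x, q (q x)] := by
    rw [hsym1 (q x) (x) (q (q x)) (x)]; rw [hsym2 (x) (q x) (q (q x)) (x)]; try ring
  have hc2132 : R ![q x, x, q (q x), q x] = R ![x, q x, x, q (q x)] := by
    rw [hsym1 (q x) (x) (q (q x)) (q x)]; rw [hsym2 (x) (q x) (q (q x)) (q x)]; rw [hL1223]; try ring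
  have hc2312 : R ![q x, q (q x), x, q x] = R ![x, q x, x, q (q x)] := by
    rw [hL2312]; try ring
  have hc2313 : R ![q x, q (q x), x, q (q x)] = R ![x, q x, x, q (q x)] := by
    rw [hL2313]; try ring
  have hc2321 : R ![q x, q (q x), q x, x] = -R ![x, q x, x, q (q x)] := by
    rw [hsym2 (q x) (q (q x)) (q x) (x)]; rw [hL2312]; try ring
  have hc2323 : R ![q x, q (q x), q x, q (q x)] = R ![x, q x, x, q x] := by
    rw [hK23]; try ring
  have hc2331 : R ![q x, q (q x), q (q x), x] = -R ![x, q x, x, q (q x)] := by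
    rw [hsym2 (q x) (q (q x)) (q (q x)) (x)]; rw [hL2313]; try ring
  have hc2332 : R ![q x, q (q x), q (q x), q x] = -R ![x, q x, x, q x] := by
    rw [hsym2 (q x) (q (q x)) (q (q x)) (q x)]; rw [hK23]; try ring
  have hc3112 : R ![q (q x), x, x, q x] = -R ![x, q x, x, q (q x)] := by
    rw [hsym1 (q (q x)) (x) (x) (q x)]; rw [hL1312]; try ring
  have hc3113 : R ![q (q x), x, x, q (q x)] = -R ![x, q x, x, q x] := by
    rw [hsym1 (q (q x)) (x) (x) (q (q x))]; rw [hK13]; try ring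
  have hc3121 : R ![q (q x), x, q x, x] = R ![x, q x, x, q (q x)] := by
    rw [hsym1 (q (q x)) (x) (q x) (x)]; rw [hsym2 (x) (q (q x)) (q x) (x)]; rw [hL1312]; try ring
  have hc3123 : R ![q (q x), x, q x, q (q x)] = -R ![x, q x, x, q (q x)] := by
    rw [hsym1 (q (q x)) (x) (q x) (q (q x))]; rw [hL1323]; try ring
  have hc3131 : R ![q (q x), x, q (q x), x] = R ![x, q x, x, q x] := by
    rw [hsym1 (q (q x)) (x) (q (q x)) (x)]; rw [hsym2 (x) (q (q x)) (q (q x)) (x)]; rw [hK13]; try ring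
  have hc3132 : R ![q (q x), x, q (q x), q x] = R ![x, q x, x, q (q x)] := by
    rw [hsym1 (q (q x)) (x) (q (q x)) (q x)]; rw [hsym2 (x) (q (q x)) (q (q x)) (q x)]; rw [hL1323]; try ring
  have hc3212 : R ![q (q x), q x, x, q x] = -R ![x, q x, x, q (q x)] := by
    rw [hsym1 (q (q x)) (q x) (x) (q x)]; rw [hL2312]; try ring
  have hc3213 : R ![q (q x), q x, x, q (q x)] = -R ![x, q x, x, q (q x)] := by
    rw [hsym1 (q (q x)) (q x) (x) (q (q x))]; rw [hL2313]; try ring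
  have hc3221 : R ![q (q x), q x, q x, x] = R ![x, q x, x, q (q x)] := by
    rw [hsym1 (q (q x)) (q x) (q x) (x)]; rw [hsym2 (q x) (q (q x)) (q x) (x)]; rw [hL2312]; try ring
  have hc3223 : R ![q (q x), q x, q x, q (q x)] = -R ![x, q x, x, q x] := by
    rw [hsym1 (q (q x)) (q x) (q x) (q (q x))]; rw [hK23]; try ring
  have hc3231 : R ![q (q x), q x, q (q x), x] = R ![x, q x, x, q (q x)] := by
    rw [hsym1 (q (q x)) (q x) (q (q x)) (x)]; rw [hsym2 (q x) (q (q x)) (q (q x)) (x)]; rw [hL2313]; try ring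
  have hc3232 : R ![q (q x), q x, q (q x), q x] = R ![x, q x, x, q x] := by
    rw [hsym1 (q (q x)) (q x) (q (q x)) (q x)]; rw [hsym2 (q x) (q (q x)) (q (q x)) (q x)]; rw [hK23]; try ring
  -- linear independence of x, qx, q²x
  have hindep : LinearIndependent ℝ ![x, q x, q (q x)] := by
    apply Fintype.linearIndependent_iff.mpr
    intro f hf
    rw [Fin.sum_univ_three] at hf
    simp only [Matrix.cons_val_zero, Matrix.cons_val_one, Matrix.head_cons,
      Matrix.cons_val_two, Matrix.tail_cons] at hf
    have e0 : f 0 = 0 := by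
      have h := congrArg (fun w => g A B w x) hf
      simp only [gcombL, gzeroL] at h
      rw [hx1, gsymm A B (q x) x, gsymm A B (q (q x)) x, hx4, hx5] at h
      linarith
    have e1 : f 1 = 0 := by
      have h := congrArg (fun w => g A B w (q x)) hf
      simp only [gcombL, gzeroL] at h
      rw [hx2, hx4, gsymm A B (q (q x)) (q x), hx6] at h
      linarith
    have e2 : f 2 = 0 := by
      have h := congrArg (fun w => g A B w (q (q x))) hf
      simp only [gcombL, gzeroL] at h
      rw [hx3, hx5, hx6] at h
      linarith
    intro i; fin_cases i <;> assumption
  -- representation of u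
  have hcard : Fintype.card (Fin 3) = Module.finrank ℝ (Fin 3 → ℝ) := by simp
  set bas := basisOfLinearIndependentOfCardEqFinrank hindep hcard with hbdef
  have hco : ⇑bas = ![x, q x, q (q x)] :=
    coe_basisOfLinearIndependentOfCardEqFinrank hindep hcard
  obtain ⟨a, b, d, hurep⟩ : ∃ a b d : ℝ, u = a • x + b • q x + d • q (q x) := by
    refine ⟨bas.repr u 0, bas.repr u 1, bas.repr u 2, ?_⟩
    have hs := bas.sum_repr u
    rw [Fin.sum_univ_three, hco] at hs
    simp only [Matrix.cons_val_zero, Matrix.cons_val_one, Matrix.head_cons,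
      Matrix.cons_val_two, Matrix.tail_cons] at hs
    linear_combination (norm := module) -hs
  have hqurep : q u = (-d) • x + a • q x + b • q (q x) := by
    rw [hurep, qlin, qqq]
    module
  -- scalar identities
  have habd : a ^ 2 + b ^ 2 + d ^ 2 = 1 := by
    have h := huu
    rw [hurep, gcomb3, hx1, hx2, hx3, hx4, hx5, hx6,
      gsymm A B (q x) x, gsymm A B (q (q x)) x, gsymm A B (q (q x)) (q x),
      hx4, hx5, hx6] at h
    linear_combination h
  have hc : g A B u (q u) = a * b + b * d - a * d := by
    rw [hqurep, hurep, gcomb3, hx1, hx2, hx3, hx4, hx5, hx6,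
      gsymm A B (q x) x, gsymm A B (q (q x)) x, gsymm A B (q (q x)) (q x),
      hx4, hx5, hx6]
    ring
  have hguu' : g A B (q u) (q u) = 1 := by rw [gq']; exact huu
  -- the main expansion
  have hval : R ![u, q u, u, q u] =
      R ![x, q x, x, q x] * ((a ^ 2 + b ^ 2 + d ^ 2) ^ 2 - (a * b + b * d - a * d) ^ 2) +
        2 * (a * b + b * d - a * d) * ((a ^ 2 + b ^ 2 + d ^ 2) + (a * b + b * d - a * d)) *
          R ![x, q x, x, q (q x)] := by
    rw [hqurep, hurep]
    simp only [Radd0, Rsmul0]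
    simp only [Radd1, Rsmul1]
    simp only [Radd2, Rsmul2]
    simp only [Radd3, Rsmul3]
    simp only [Rzero1, Rzero2, hc1221, hc1223, hc1231, hc1232, hc1312, hc1313, hc1321, hc1323, hc1331, hc1332, hc2112, hc2113, hc2121, hc2123, hc2131, hc2132, hc2312, hc2313, hc2321, hc2323, hc2331, hc2332, hc3112, hc3113, hc3121, hc3123, hc3131, hc3132, hc3212, hc3213, hc3221, hc3223, hc3231, hc3232]
    ring
  have hval2 : R ![u, q u, u, q u] =
      R ![x, q x, x, q x] * (1 - g A B u (q u) ^ 2) +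
        2 * g A B u (q u) * (1 + g A B u (q u)) * R ![x, q x, x, q (q x)] := by
    rw [hval, habd, ← hc]; ring
  -- positivity: 1 - c² > 0
  set c := g A B u (q u) with hcdef
  have hw : q u - c • u ≠ 0 := by
    intro h0
    have hqu : q u = c • u := by
      have := sub_eq_zero.mp h0; exact this
    have hind := Fintype.linearIndependent_iff.mp hu ![c, -1, 0] ?_ 1
    · norm_num at hind
    · rw [Fin.sum_univ_three]
      simp only [Matrix.cons_val_zero, Matrix.cons_val_one, Matrix.head_cons,
        Matrix.cons_val_two, Matrix.tail_cons]
      rw [hqu]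
      module
  have hpos : 0 < 1 - c ^ 2 := by
    have := gpos A B hAB hB _ hw
    rw [gsub, hguu', huu, gsymm A B (q u) u, ← hcdef] at this
    have e : 1 - 2 * c * c + c ^ 2 * 1 = 1 - c ^ 2 := by ring
    linarith [this, e]
  have h1c : (1 : ℝ) - c ≠ 0 := by
    intro h
    have hc1 : c = 1 := by linarith [h]
    rw [hc1] at hpos
    norm_num at hpos
  have h1pc : (1 : ℝ) + c ≠ 0 := by
    intro h
    have hc1 : c = -1 := by linarith [h]
    rw [hc1] at hpos
    norm_num at hpos
  -- finish
  rw [sec, sec, hval2, huu, hguu', hx1, hx2, hx4, ← hcdef]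
  rw [show (1 : ℝ) * 1 - c ^ 2 = (1 - c) * (1 + c) by ring]
  field_simp
  ring
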